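/- arXiv:2201.08288 — 2 statements merged into one kernel-verified Lean document; each statement's English description precedes it below -/
import Mathlib

section
/- Let p ∈ ℕ⁺, let a ∈ [0,1)^p and b ∈ (0,1]^p with a_l < b_l for each coordinate l, and let δ ∈ (0,1). Then the sequence of functions 1_J(x,a,b) = ∏_{l=1}^p 1_J(x_l, a_l, b_l), J = 0,1,2,…, converges uniformly to the indicator 𝟙(a < x < b) = ∏_{l=1}^p 𝟙(a_l < x_l < b_l) for x ranging over the product set U_{δ,(a,b)} = ∏_{l=1}^p U_{δ,(a_l,b_l)}. -/
/-- `cfun j x`: c₀(x)=1, c_{2j-1}(x)=cos((2j-1)x), c_{2j}(x)=sin((2j-1)x). -/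
noncomputable def cfun (j : ℕ) (x : ℝ) : ℝ :=
  if j = 0 then 1
  else if j % 2 = 1 then Real.cos ((j : ℝ) * x)
  else Real.sin (((j : ℝ) - 1) * x)

/-- `gfun j a b`: the coefficients g_j(a,b). -/
noncomputable def gfun (j : ℕ) (a b : ℝ) : ℝ :=
  if j = 0 then
    1 - (1 / 2) * ((if 0 < a then (1 : ℝ) else 0) + (if b < 1 then (1 : ℝ) else 0))
  else if j % 2 = 1 then
    (2 / (Real.pi * (j : ℝ))) *
      ((if b < 1 then (1 : ℝ) else 0) * Real.sin ((j : ℝ) * b) -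
        (if 0 < a then (1 : ℝ) else 0) * Real.sin ((j : ℝ) * a))
  else
    (2 / (Real.pi * ((j : ℝ) - 1))) *
      ((if 0 < a then (1 : ℝ) else 0) * Real.cos (((j : ℝ) - 1) * a) -
        (if b < 1 then (1 : ℝ) else 0) * Real.cos (((j : ℝ) - 1) * b))

/-- Indicator of the open interval (a,b). -/
noncomputable def indIoo (a b x : ℝ) : ℝ := if a < x ∧ x < b then 1 else 0

/-- The Jth partial sum 1_J(x,a,b) = Σ_{j=0}^{2J} c_j(x)·g_j(a,b). -/
noncomputable def oneJ (J : ℕ) (x a b : ℝ) : ℝ :=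
  ∑ j ∈ Finset.range (2 * J + 1), cfun j x * gfun j a b

/-- p-dimensional partial sum: 1_J(x,a,b) = ∏_{l} 1_J(x_l,a_l,b_l). -/
noncomputable def oneJp {p : ℕ} (J : ℕ) (x a b : Fin p → ℝ) : ℝ :=
  ∏ l, oneJ J (x l) (a l) (b l)

/-- p-dimensional indicator: 𝟙(a<x<b) = ∏_l 𝟙(a_l<x_l<b_l). -/
noncomputable def indBox {p : ℕ} (a b x : Fin p → ℝ) : ℝ :=
  ∏ l, indIoo (a l) (b l) (x l)

/-- The set U_{δ,(a,b)}: (0,1) with (a-δ,a+δ) removed when a>0 and (b-δ,b+δ) removed when b<1. -/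
def Uset (δ a b : ℝ) : Set ℝ :=
  {x | x ∈ Set.Ioo (0 : ℝ) 1 ∧ (0 < a → x ∉ Set.Ioo (a - δ) (a + δ)) ∧
    (b < 1 → x ∉ Set.Ioo (b - δ) (b + δ))}

open Real Filter Finset in
noncomputable def Ssum (J : ℕ) (t : ℝ) : ℝ :=
  ∑ k ∈ Finset.range J, Real.sin ((2*k+1)*t) / (2*k+1)

section Aux
open Real Filter Finset

lemma Ssum_succ (J : ℕ) (t : ℝ) :
    Ssum (J+1) t = Ssum J t + Real.sin ((2*J+1)*t) / (2*J+1) := by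
  simp [Ssum, Finset.sum_range_succ]

lemma Ssum_neg (J : ℕ) (t : ℝ) : Ssum J (-t) = - Ssum J t := by
  simp [Ssum, mul_neg, neg_div, Finset.sum_neg_distrib]

lemma dirichlet_sum (J : ℕ) (s : ℝ) (hs : Real.sin s ≠ 0) :
    ∑ k ∈ Finset.range J, Real.cos ((2*k+1)*s) = Real.sin (2*J*s) / (2 * Real.sin s) := by
  induction J with
  | zero => simp
  | succ J ih =>
    rw [Finset.sum_range_succ, ih]
    have key : Real.sin (2*(J+1)*s) - Real.sin (2*J*s)
        = 2 * Real.sin s * Real.cos ((2*J+1)*s) := by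
      rw [Real.sin_sub_sin]
      ring_nf
    push_cast
    field_simp
    ring_nf at key ⊢
    linarith [key]

lemma sin_odd_pi_div_two (k : ℕ) : Real.sin ((2*(k:ℝ)+1)*(Real.pi/2)) = (-1)^k := by
  have h : (2*(k:ℝ)+1)*(Real.pi/2) = 0 + k*Real.pi + Real.pi/2 := by ring
  rw [h, Real.sin_add_pi_div_two, Real.cos_add_nat_mul_pi, Real.cos_zero, mul_one]

lemma Ssum_pi_div_two (J : ℕ) :
    Ssum J (Real.pi/2) = ∑ k ∈ Finset.range J, (-1)^k / (2*(k:ℝ)+1) := by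
  unfold Ssum
  refine Finset.sum_congr rfl fun k _ => ?_
  rw [sin_odd_pi_div_two]

lemma Ssum_pi_div_two_tendsto :
    Filter.Tendsto (fun J => Ssum J (Real.pi/2)) Filter.atTop (nhds (Real.pi/4)) := by
  simpa [Ssum_pi_div_two] using Real.tendsto_sum_pi_div_four

lemma integral_cos_mul (c A B : ℝ) (hc : c ≠ 0) :
    ∫ s in A..B, Real.cos (c*s) = Real.sin (c*B)/c - Real.sin (c*A)/c := by
  have := intervalIntegral.integral_comp_mul_left (a := A) (b := B) (fun u => Real.cos u) hc
  rw [this, integral_cos]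
  simp [smul_eq_mul]
  ring

lemma sin_pos_on (s δ : ℝ) (hδ : 0 < δ) (h1 : δ ≤ s) (h2 : s ≤ Real.pi/2) : 0 < Real.sin s :=
  Real.sin_pos_of_pos_of_lt_pi (lt_of_lt_of_le hδ h1)
    (lt_of_le_of_lt h2 (by linarith [Real.pi_pos]))

lemma Ssum_integral_repr (J : ℕ) (t δ : ℝ) (hδ : 0 < δ) (ht : δ ≤ t) (ht2 : t ≤ Real.pi/2) :
    Ssum J t = Ssum J (Real.pi/2) + ∫ s in (Real.pi/2)..t, Real.sin (2*J*s) / (2*Real.sin s) := by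
  have hsub : Set.uIcc (Real.pi/2) t ⊆ Set.Icc δ (Real.pi/2) := by
    rw [Set.uIcc_of_ge ht2]
    exact Set.Icc_subset_Icc ht le_rfl
  have hcong : ∫ s in (Real.pi/2)..t, Real.sin (2*J*s) / (2*Real.sin s)
      = ∫ s in (Real.pi/2)..t, ∑ k ∈ Finset.range J, Real.cos ((2*k+1)*s) := by
    apply intervalIntegral.integral_congr
    intro s hs
    obtain ⟨h1, h2⟩ := hsub hs
    exact (dirichlet_sum J s (ne_of_gt (sin_pos_on s δ hδ h1 h2))).symm
  have hsum := intervalIntegral.integral_finset_sum (μ := MeasureTheory.volume)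
    (a := Real.pi/2) (b := t) (s := Finset.range J)
    (f := fun (k:ℕ) (s:ℝ) => Real.cos ((2*(k:ℝ)+1)*s))
    (fun k _ => (by fun_prop :
      Continuous fun s : ℝ => Real.cos ((2*(k:ℝ)+1)*s)).intervalIntegrable _ _)
  rw [hcong, hsum]
  have : ∀ k ∈ Finset.range J, (∫ s in (Real.pi/2)..t, Real.cos ((2*(k:ℝ)+1)*s))
      = Real.sin ((2*k+1)*t)/(2*k+1) - Real.sin ((2*k+1)*(Real.pi/2))/(2*k+1) := by
    intro k _
    have hc : (2*(k:ℝ)+1) ≠ 0 := by positivity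
    rw [integral_cos_mul _ _ _ hc]
  rw [Finset.sum_congr rfl this, Finset.sum_sub_distrib]
  unfold Ssum
  ring

lemma sin_mono_bound (s δ : ℝ) (hδ : 0 < δ) (h1 : δ ≤ s) (h2 : s ≤ Real.pi/2) :
    Real.sin δ ≤ Real.sin s := by
  have hpi := Real.pi_pos
  apply Real.sin_le_sin_of_le_of_le_pi_div_two (by linarith) h2 h1

set_option maxHeartbeats 1000000 in

set_option maxHeartbeats 1000000 in
lemma ibp_bound (J : ℕ) (hJ : 1 ≤ J) (t δ : ℝ) (hδ : 0 < δ) (ht : δ ≤ t) (ht2 : t ≤ Real.pi/2) :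
    |∫ s in t..(Real.pi/2), Real.sin (2*J*s) / (2*Real.sin s)|
      ≤ (1/Real.sin δ + Real.pi/(Real.sin δ)^2) / J := by
  have hπ := Real.pi_pos
  have hsδ : 0 < Real.sin δ := Real.sin_pos_of_pos_of_lt_pi hδ (by linarith)
  have hJR : (0:ℝ) < J := by exact_mod_cast hJ
  set c : ℝ := 2*J with hc
  have hc0 : c ≠ 0 := by positivity
  -- u and v
  set u : ℝ → ℝ := fun s => (2*Real.sin s)⁻¹ with hu
  set u' : ℝ → ℝ := fun s => -(2*Real.cos s) / (2*Real.sin s)^2 with hu'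
  set v : ℝ → ℝ := fun s => -Real.cos (c*s)/c with hv
  set v' : ℝ → ℝ := fun s => Real.sin (c*s) with hv'
  have hmem : ∀ s ∈ Set.uIcc t (Real.pi/2), δ ≤ s ∧ s ≤ Real.pi/2 := by
    intro s hs
    rw [Set.uIcc_of_le ht2] at hs
    exact ⟨le_trans ht hs.1, hs.2⟩
  have hsinpos : ∀ s ∈ Set.uIcc t (Real.pi/2), 0 < Real.sin s := fun s hs => by
    obtain ⟨h1, h2⟩ := hmem s hs
    exact Real.sin_pos_of_pos_of_lt_pi (by linarith) (by linarith)
  have hderivu : ∀ s ∈ Set.uIcc t (Real.pi/2), HasDerivAt u (u' s) s := by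
    intro s hs
    have hsp := hsinpos s hs
    have h := ((Real.hasDerivAt_sin s).const_mul (2:ℝ)).inv
      (by positivity : (2*Real.sin s) ≠ 0)
    exact h
  have hderivv : ∀ s ∈ Set.uIcc t (Real.pi/2), HasDerivAt v (v' s) s := by
    intro s hs
    have h1 : HasDerivAt (fun s : ℝ => c*s) c s := by
      simpa using (hasDerivAt_id s).const_mul c
    have h2 := ((Real.hasDerivAt_cos (c*s)).comp s h1).neg.div_const c
    have : Real.sin (c*s) * c / c = Real.sin (c*s) := by field_simp
    simpa [hv, hv', this] using h2
  have hcontu' : ContinuousOn u' (Set.uIcc t (Real.pi/2)) := by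
    apply ContinuousOn.div
    · fun_prop
    · fun_prop
    · intro s hs
      have := hsinpos s hs
      positivity
  have hintu' : IntervalIntegrable u' MeasureTheory.volume t (Real.pi/2) := by
    apply hcontu'.intervalIntegrable
  have hintv' : IntervalIntegrable v' MeasureTheory.volume t (Real.pi/2) := by
    exact (by fun_prop : Continuous v').intervalIntegrable _ _
  have hibp := intervalIntegral.integral_mul_deriv_eq_deriv_mul hderivu hderivv hintu' hintv'
  have heq : ∫ s in t..(Real.pi/2), Real.sin (2*J*s) / (2*Real.sin s)
      = ∫ s in t..(Real.pi/2), u s * v' s := by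
    apply intervalIntegral.integral_congr
    intro s hs
    simp [hu, hv', div_eq_mul_inv, mul_comm, hc]
  rw [heq, hibp]
  -- bounds
  have hubd : ∀ s ∈ Set.uIcc t (Real.pi/2), |u s| ≤ 1/(2*Real.sin δ) := by
    intro s hs
    obtain ⟨h1, h2⟩ := hmem s hs
    have h3 : Real.sin δ ≤ Real.sin s := sin_mono_bound s δ hδ h1 h2
    have hsp := hsinpos s hs
    have hpos : 0 < u s := by rw [hu]; positivity
    rw [abs_of_pos hpos, hu]
    rw [one_div]
    apply inv_anti₀ (by positivity)
    linarith
  have hvbd : ∀ s, |v s| ≤ 1/c := by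
    intro s
    have hcpos : (0:ℝ) < c := by rw [hc]; positivity
    have : |v s| = |Real.cos (c*s)|/c := by
      rw [hv, abs_div, abs_neg, abs_of_pos hcpos]
    rw [this]
    gcongr
    exact Real.abs_cos_le_one _
  have hcpos : (0:ℝ) < c := by rw [hc]; positivity
  set K := Real.sin δ with hK
  have hKp : 0 < K := hsδ
  have hu'vbd : ∀ s ∈ Set.uIcc t (Real.pi/2), ‖u' s * v s‖ ≤ 1/(K^2*c) := by
    intro s hs
    obtain ⟨h1, h2⟩ := hmem s hs
    have h3 : K ≤ Real.sin s := sin_mono_bound s δ hδ h1 h2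
    have hsp := hsinpos s hs
    have hu'b : |u' s| ≤ 1/(2*K^2) := by
      rw [hu', abs_div, abs_neg, abs_of_nonneg (by positivity : (0:ℝ) ≤ (2*Real.sin s)^2)]
      have h4 : |2*Real.cos s| ≤ 2 := by
        rw [abs_mul, abs_two]
        nlinarith [Real.abs_cos_le_one s]
      calc |2*Real.cos s| / (2*Real.sin s)^2 ≤ 2 / (2*K)^2 :=
            div_le_div₀ (by norm_num) h4 (by positivity) (by nlinarith)
        _ = 1/(2*K^2) := by ring
    rw [Real.norm_eq_abs, abs_mul]
    calc |u' s| * |v s| ≤ (1/(2*K^2)) * (1/c) :=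
          mul_le_mul hu'b (hvbd s) (abs_nonneg _) (by positivity)
      _ ≤ 1/(K^2*c) := by
          rw [div_mul_div_comm]
          apply div_le_div₀ (by positivity) (by norm_num) (by positivity)
          nlinarith
  have hintbd : |∫ s in t..(Real.pi/2), u' s * v s| ≤ (1/(K^2*c)) * (Real.pi/2) := by
    have h := intervalIntegral.norm_integral_le_of_norm_le_const
      (C := 1/(K^2*c)) (f := fun s => u' s * v s) (a := t) (b := Real.pi/2)
      (fun s hs => hu'vbd s (Set.uIoc_subset_uIcc hs))
    rw [Real.norm_eq_abs] at h
    apply h.trans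
    have h2 : |Real.pi/2 - t| ≤ Real.pi/2 := by
      rw [abs_of_nonneg (by linarith)]
      linarith
    have : (0:ℝ) ≤ 1/(K^2*c) := by positivity
    nlinarith
  have huv1 : |u (Real.pi/2) * v (Real.pi/2)| ≤ 1/(2*K) * (1/c) := by
    rw [abs_mul]
    exact mul_le_mul (hubd _ (Set.right_mem_uIcc)) (hvbd _) (abs_nonneg _) (by positivity)
  have huv2 : |u t * v t| ≤ 1/(2*K) * (1/c) := by
    rw [abs_mul]
    exact mul_le_mul (hubd _ (Set.left_mem_uIcc)) (hvbd _) (abs_nonneg _) (by positivity)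
  calc |u (Real.pi/2) * v (Real.pi/2) - u t * v t - ∫ s in t..(Real.pi/2), u' s * v s|
      ≤ |u (Real.pi/2) * v (Real.pi/2)| + |u t * v t|
        + |∫ s in t..(Real.pi/2), u' s * v s| := by
        apply (abs_sub _ _).trans
        gcongr
        exact abs_sub _ _
    _ ≤ 1/(2*K) * (1/c) + 1/(2*K) * (1/c) + (1/(K^2*c)) * (Real.pi/2) := by
        gcongr
    _ = (1/(2*K) + Real.pi/(4*K^2))/(J:ℝ) := by
        rw [hc]
        have hgen : ∀ L M : ℝ, 0 < L → 0 < M →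
            1/(2*L)*(1/(2*M)) + 1/(2*L)*(1/(2*M)) + 1/(L^2*(2*M))*(Real.pi/2)
              = (1/(2*L) + Real.pi/(4*L^2))/M := by
          intro L M hL hM
          field_simp
          ring
        exact hgen K (J:ℝ) hKp hJR
    _ ≤ (1/K + Real.pi/K^2) / J := by
        have a1 : 1/(2*K) ≤ 1/K := div_le_div₀ (by norm_num) le_rfl hKp (by linarith)
        have a2 : Real.pi/(4*K^2) ≤ Real.pi/K^2 :=
          div_le_div₀ hπ.le le_rfl (by positivity) (by nlinarith)
        gcongr

lemma one_lt_pi_div_two : (1:ℝ) < Real.pi/2 := by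
  have := Real.pi_gt_three
  linarith

lemma Ssum_unif (δ : ℝ) (hδ : 0 < δ) (hδ1 : δ < 1) :
    ∀ ε > 0, ∃ N : ℕ, ∀ J ≥ N, ∀ t : ℝ, δ ≤ |t| → |t| ≤ 1 →
      |Ssum J t - (if 0 < t then Real.pi/4 else -(Real.pi/4))| < ε := by
  intro ε hε
  set C : ℝ := 1/Real.sin δ + Real.pi/(Real.sin δ)^2 with hC
  have hπ := Real.pi_pos
  have hsδ : 0 < Real.sin δ := Real.sin_pos_of_pos_of_lt_pi hδ
    (by linarith [one_lt_pi_div_two])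
  have hC0 : 0 < C := by rw [hC]; positivity
  -- N1 from the Leibniz series
  have h1 := Metric.tendsto_atTop.mp Ssum_pi_div_two_tendsto (ε/2) (by positivity)
  obtain ⟨N1, hN1⟩ := h1
  obtain ⟨N2, hN2⟩ := exists_nat_gt (C/(ε/2))
  refine ⟨max N1 (max N2 1), fun J hJ => ?_⟩
  have hJ1 : N1 ≤ J := le_trans (le_max_left _ _) hJ
  have hJ2 : N2 ≤ J := le_trans (le_trans (le_max_left _ _) (le_max_right _ _)) hJ
  have hJ3 : 1 ≤ J := le_trans (le_trans (le_max_right _ _) (le_max_right _ _)) hJ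
  have hJR : (0:ℝ) < J := by exact_mod_cast hJ3
  -- key positive-side estimate
  have key : ∀ t : ℝ, δ ≤ t → t ≤ 1 → |Ssum J t - Real.pi/4| < ε := by
    intro t h1t h2t
    have ht2 : t ≤ Real.pi/2 := le_of_lt (lt_of_le_of_lt h2t one_lt_pi_div_two)
    have hrep := Ssum_integral_repr J t δ hδ h1t ht2
    have hflip : (∫ s in (Real.pi/2)..t, Real.sin (2*J*s) / (2*Real.sin s))
        = -∫ s in t..(Real.pi/2), Real.sin (2*J*s) / (2*Real.sin s) := by
      rw [intervalIntegral.integral_symm]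
    have hibp := ibp_bound J hJ3 t δ hδ h1t ht2
    have hlb : C / (J:ℝ) < ε/2 := by
      rw [div_lt_iff₀ hJR]
      have : C/(ε/2) < (J:ℝ) := lt_of_lt_of_le hN2 (by exact_mod_cast hJ2)
      rw [div_lt_iff₀ (by positivity)] at this
      linarith
    have hLeib : |Ssum J (Real.pi/2) - Real.pi/4| < ε/2 := by
      have := hN1 J hJ1
      rwa [Real.dist_eq] at this
    calc |Ssum J t - Real.pi/4|
        = |(Ssum J (Real.pi/2) - Real.pi/4)
            - ∫ s in t..(Real.pi/2), Real.sin (2*J*s) / (2*Real.sin s)| := by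
          rw [hrep, hflip]; congr 1; ring
      _ ≤ |Ssum J (Real.pi/2) - Real.pi/4|
            + |∫ s in t..(Real.pi/2), Real.sin (2*J*s) / (2*Real.sin s)| := abs_sub _ _
      _ < ε/2 + C/(J:ℝ) := by
          apply add_lt_add_of_lt_of_le hLeib (hibp.trans ?_)
          rw [hC]
      _ < ε := by linarith
  intro t h1t h2t
  by_cases hpos : 0 < t
  · rw [if_pos hpos]
    rw [abs_of_pos hpos] at h1t h2t
    exact key t h1t h2t
  · rw [if_neg hpos]
    push_neg at hpos
    rw [abs_of_nonpos hpos] at h1t h2t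
    have := key (-t) h1t h2t
    rw [Ssum_neg] at this
    calc |Ssum J t - -(Real.pi/4)| = |-(Ssum J t) - Real.pi/4| := by
          rw [← abs_neg]; ring_nf
      _ < ε := this

lemma cfun_odd (J : ℕ) (x : ℝ) : cfun (2*J+1) x = Real.cos ((2*(J:ℝ)+1)*x) := by
  have h1 : (2*J+1) % 2 = 1 := by omega
  have h3 : (2*J+1 : ℕ) ≠ 0 := by omega
  simp only [cfun, if_neg h3, if_pos h1]
  push_cast
  ring_nf

lemma cfun_even (J : ℕ) (x : ℝ) : cfun (2*J+2) x = Real.sin ((2*(J:ℝ)+1)*x) := by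
  have h1 : ¬ (2*J+2) % 2 = 1 := by omega
  have h3 : (2*J+2 : ℕ) ≠ 0 := by omega
  simp only [cfun, if_neg h3, if_neg h1]
  push_cast
  ring_nf

lemma gfun_odd (J : ℕ) (a b : ℝ) : gfun (2*J+1) a b =
    (2 / (Real.pi * (2*(J:ℝ)+1))) *
      ((if b < 1 then (1 : ℝ) else 0) * Real.sin ((2*(J:ℝ)+1) * b) -
        (if 0 < a then (1 : ℝ) else 0) * Real.sin ((2*(J:ℝ)+1) * a)) := by
  have h1 : (2*J+1) % 2 = 1 := by omega
  have h3 : (2*J+1 : ℕ) ≠ 0 := by omega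
  simp only [gfun, if_neg h3, if_pos h1]
  push_cast
  ring_nf

lemma gfun_even (J : ℕ) (a b : ℝ) : gfun (2*J+2) a b =
    (2 / (Real.pi * (2*(J:ℝ)+1))) *
      ((if 0 < a then (1 : ℝ) else 0) * Real.cos ((2*(J:ℝ)+1) * a) -
        (if b < 1 then (1 : ℝ) else 0) * Real.cos ((2*(J:ℝ)+1) * b)) := by
  have h1 : ¬ (2*J+2) % 2 = 1 := by omega
  have h3 : (2*J+2 : ℕ) ≠ 0 := by omega
  simp only [gfun, if_neg h3, if_neg h1]
  have : ((2*J+2 : ℕ) : ℝ) - 1 = 2*(J:ℝ)+1 := by push_cast; ring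
  rw [this]

lemma oneJ_closed (J : ℕ) (x a b : ℝ) :
    oneJ J x a b = gfun 0 a b + (2/Real.pi) *
      ((if 0 < a then (1:ℝ) else 0) * Ssum J (x - a)
        + (if b < 1 then (1:ℝ) else 0) * Ssum J (b - x)) := by
  induction J with
  | zero => simp [oneJ, Ssum, cfun]
  | succ J ih =>
    have hrange : 2 * (J+1) + 1 = (2*J+1) + 1 + 1 := by ring
    have hsplit : oneJ (J+1) x a b = oneJ J x a b
        + cfun (2*J+1) x * gfun (2*J+1) a b + cfun (2*J+2) x * gfun (2*J+2) a b := by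
      rw [oneJ, hrange, Finset.sum_range_succ, Finset.sum_range_succ]
      rfl
    rw [hsplit, ih, Ssum_succ, Ssum_succ, cfun_odd, cfun_even, gfun_odd, gfun_even]
    set Ia := (if 0 < a then (1:ℝ) else 0) with hIa
    set Ib := (if b < 1 then (1:ℝ) else 0) with hIb
    set c : ℝ := 2*(J:ℝ)+1 with hc
    have hc0 : c ≠ 0 := by positivity
    have hπ : Real.pi ≠ 0 := Real.pi_ne_zero
    have e1 : Real.sin (c*(x-a)) = Real.sin (c*x) * Real.cos (c*a)
        - Real.cos (c*x) * Real.sin (c*a) := by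
      rw [mul_sub, Real.sin_sub]
    have e2 : Real.sin (c*(b-x)) = Real.sin (c*b) * Real.cos (c*x)
        - Real.cos (c*b) * Real.sin (c*x) := by
      rw [mul_sub, Real.sin_sub]
    rw [e1, e2]
    field_simp
    ring

theorem oneJ_unif (a b δ : ℝ) (ha : a ∈ Set.Ico (0:ℝ) 1) (hb : b ∈ Set.Ioc (0:ℝ) 1)
    (hab : a < b) (hδ : 0 < δ) (hδ1 : δ < 1) :
    TendstoUniformlyOn (fun J x => oneJ J x a b) (indIoo a b) Filter.atTop (Uset δ a b) := by
  rw [Metric.tendstoUniformlyOn_iff]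
  intro ε hε
  obtain ⟨N, hN⟩ := Ssum_unif δ hδ hδ1 (ε/2) (by positivity)
  rw [Filter.eventually_atTop]
  refine ⟨N, fun J hJ x hx => ?_⟩
  obtain ⟨⟨hx0, hx1⟩, hxa, hxb⟩ := hx
  have hπ := Real.pi_pos
  have hπ2 := Real.pi_gt_three
  set Ia := (if 0 < a then (1:ℝ) else 0) with hIa
  set Ib := (if b < 1 then (1:ℝ) else 0) with hIb
  set La := (if 0 < x - a then Real.pi/4 else -(Real.pi/4)) with hLa
  set Lb := (if 0 < b - x then Real.pi/4 else -(Real.pi/4)) with hLb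
  -- limit identity
  have hident : indIoo a b x = gfun 0 a b + (2/Real.pi) * (Ia * La + Ib * Lb) := by
    rw [hIa, hIb, hLa, hLb]
    have hg0 : gfun 0 a b = 1 - (1 / 2) * ((if 0 < a then (1 : ℝ) else 0) + (if b < 1 then (1 : ℝ) else 0)) := by
      simp [gfun]
    unfold indIoo
    rw [hg0]
    by_cases hP : a < x
    · by_cases hQ : x < b
      · have d1 : 0 < x - a := by linarith
        have d2 : 0 < b - x := by linarith
        by_cases hA : 0 < a <;> by_cases hB : b < 1 <;>
          simp [hP, hQ, d1, d2, hA, hB] <;> (field_simp; try ring)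
      · have hBlt : b < 1 := lt_of_le_of_lt (not_lt.mp hQ) hx1
        have d2 : ¬ (0 < b - x) := by push_neg at hQ ⊢; linarith
        have hPQ : ¬ (a < x ∧ x < b) := fun h => hQ h.2
        have d1 : 0 < x - a := by linarith
        by_cases hA : 0 < a <;>
          simp [hPQ, d1, d2, hBlt, hA] <;> (field_simp; try ring)
    · have hAlt : 0 < a := lt_of_lt_of_le hx0 (not_lt.mp hP)
      have hQ : x < b := lt_of_le_of_lt (not_lt.mp hP) hab
      have d1 : ¬ (0 < x - a) := by push_neg at hP ⊢; linarith
      have hPQ : ¬ (a < x ∧ x < b) := fun h => hP h.1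
      have d2 : 0 < b - x := by linarith
      by_cases hB : b < 1 <;>
        simp [hPQ, d1, d2, hAlt, hB] <;> (field_simp; try ring)
  have hdiff : indIoo a b x - oneJ J x a b
      = (2/Real.pi) * (Ia * (La - Ssum J (x - a)) + Ib * (Lb - Ssum J (b - x))) := by
    rw [hident, oneJ_closed]
    ring
  -- per-term bounds
  have e1 : |Ia * (La - Ssum J (x - a))| < ε/2 := by
    by_cases hA : 0 < a
    · have hnot := hxa hA
      rw [Set.mem_Ioo] at hnot
      push_neg at hnot
      have habs1 : δ ≤ |x - a| := by
        rcases le_or_gt (a + δ) x with h | h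
        · exact le_abs.mpr (Or.inl (by linarith))
        · have hx' : x ≤ a - δ := by
            by_contra hc
            push_neg at hc
            exact absurd (hnot hc) (not_le.mpr h)
          exact le_abs.mpr (Or.inr (by linarith))
      have habs2 : |x - a| ≤ 1 := abs_le.mpr ⟨by linarith [ha.2], by linarith [ha.1]⟩
      have := hN J hJ (x - a) habs1 habs2
      rw [hIa, if_pos hA, one_mul, abs_sub_comm]
      exact this
    · rw [hIa, if_neg hA, zero_mul, abs_zero]
      positivity
  have e2 : |Ib * (Lb - Ssum J (b - x))| < ε/2 := by
    by_cases hB : b < 1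
    · have hnot := hxb hB
      rw [Set.mem_Ioo] at hnot
      push_neg at hnot
      have habs1 : δ ≤ |b - x| := by
        rcases le_or_gt (b + δ) x with h | h
        · exact le_abs.mpr (Or.inr (by linarith))
        · have hx' : x ≤ b - δ := by
            by_contra hc
            push_neg at hc
            exact absurd (hnot hc) (not_le.mpr h)
          exact le_abs.mpr (Or.inl (by linarith))
      have habs2 : |b - x| ≤ 1 := abs_le.mpr ⟨by linarith [hb.1], by linarith [hb.2]⟩
      have := hN J hJ (b - x) habs1 habs2
      rw [hIb, if_pos hB, one_mul, abs_sub_comm]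
      exact this
    · rw [hIb, if_neg hB, zero_mul, abs_zero]
      positivity
  rw [Real.dist_eq, hdiff, abs_mul, abs_of_pos (by positivity : (0:ℝ) < 2/Real.pi)]
  calc (2/Real.pi) * |Ia * (La - Ssum J (x - a)) + Ib * (Lb - Ssum J (b - x))|
      ≤ (2/Real.pi) * (|Ia * (La - Ssum J (x - a))| + |Ib * (Lb - Ssum J (b - x))|) := by
        gcongr
        exact abs_add_le _ _
    _ < (2/Real.pi) * ε := by
        apply mul_lt_mul_of_pos_left (by linarith) (by positivity)
    _ ≤ ε := by
        rw [div_mul_eq_mul_div, div_le_iff₀ (by positivity)]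
        nlinarith

lemma mulTU {α : Type*} {F G : ℕ → α → ℝ} {f g : α → ℝ} {S : Set α} {B : ℝ}
    (hF : TendstoUniformlyOn F f Filter.atTop S)
    (hG : TendstoUniformlyOn G g Filter.atTop S)
    (hf : ∀ x ∈ S, |f x| ≤ 1) (hg : ∀ x ∈ S, |g x| ≤ B) (hB : 0 ≤ B) :
    TendstoUniformlyOn (fun J x => F J x * G J x) (fun x => f x * g x)
      Filter.atTop S := by
  rw [Metric.tendstoUniformlyOn_iff] at *
  intro ε hε
  have h1 := hF (min 1 (ε/(2*(B+1)))) (by positivity)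
  have h2 := hG (ε/4) (by positivity)
  filter_upwards [h1, h2] with J hJ1 hJ2 x hx
  have e1 := hJ1 x hx
  have e2 := hJ2 x hx
  rw [Real.dist_eq] at *
  have hFb : |F J x| ≤ 2 := by
    have : |F J x - f x| < 1 := by
      rw [abs_sub_comm]
      exact lt_of_lt_of_le e1 (min_le_left _ _)
    calc |F J x| = |f x + (F J x - f x)| := by ring_nf
      _ ≤ |f x| + |F J x - f x| := abs_add_le _ _
      _ ≤ 2 := by linarith [hf x hx]
  calc |f x * g x - F J x * G J x|
      = |F J x * (g x - G J x) + g x * (f x - F J x)| := by ring_nf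
    _ ≤ |F J x * (g x - G J x)| + |g x * (f x - F J x)| := abs_add_le _ _
    _ = |F J x| * |g x - G J x| + |g x| * |f x - F J x| := by rw [abs_mul, abs_mul]
    _ < 2 * (ε/4) + (B+1) * (ε/(2*(B+1))) := by
        have l1 : |F J x| * |g x - G J x| ≤ 2 * |g x - G J x| :=
          mul_le_mul_of_nonneg_right hFb (abs_nonneg _)
        have l2 : |g x| * |f x - F J x| ≤ (B+1) * |f x - F J x| :=
          mul_le_mul_of_nonneg_right (by linarith [hg x hx]) (abs_nonneg _)
        have l3 : |g x - G J x| < ε/4 := e2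
        have l4 : |f x - F J x| < ε/(2*(B+1)) :=
          lt_of_lt_of_le e1 (min_le_right _ _)
        nlinarith [abs_nonneg (g x - G J x), abs_nonneg (f x - F J x),
          abs_nonneg (F J x), abs_nonneg (g x)]
    _ ≤ ε := by
        have : (B+1) * (ε/(2*(B+1))) = ε/2 := by field_simp
        rw [this]
        linarith
  done

lemma prodTU {ι α : Type*} [DecidableEq ι] (s : Finset ι) (F : ι → ℕ → α → ℝ) (f : ι → α → ℝ) (S : Set α)
    (h : ∀ i ∈ s, TendstoUniformlyOn (fun J x => F i J x) (f i) Filter.atTop S)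
    (hbd : ∀ i ∈ s, ∀ x ∈ S, |f i x| ≤ 1) :
    TendstoUniformlyOn (fun J x => ∏ i ∈ s, F i J x) (fun x => ∏ i ∈ s, f i x)
      Filter.atTop S := by
  induction s using Finset.induction_on with
  | empty =>
    rw [Metric.tendstoUniformlyOn_iff]
    intro ε hε
    filter_upwards with J x hx
    simpa using hε
  | @insert i s hi ih =>
    have hrw1 : (fun J x => ∏ j ∈ insert i s, F j J x)
        = fun J x => F i J x * ∏ j ∈ s, F j J x := by
      funext J x
      exact Finset.prod_insert hi
    have hrw2 : (fun x => ∏ j ∈ insert i s, f j x)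
        = fun x => f i x * ∏ j ∈ s, f j x := by
      funext x
      exact Finset.prod_insert hi
    rw [hrw1, hrw2]
    apply mulTU (h i (Finset.mem_insert_self i s))
      (ih (fun j hj => h j (Finset.mem_insert_of_mem hj))
        (fun j hj => hbd j (Finset.mem_insert_of_mem hj)))
      (fun x hx => hbd i (Finset.mem_insert_self i s) x hx)
      (B := 1) ?_ zero_le_one
    intro x hx
    calc |∏ j ∈ s, f j x| = ∏ j ∈ s, |f j x| := Finset.abs_prod _ _
      _ ≤ 1 := Finset.prod_le_one (fun j _ => abs_nonneg _)
            (fun j hj => hbd j (Finset.mem_insert_of_mem hj) x hx)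

end Aux

/-- the p-dimensional partial sums converge uniformly to the box indicator on
the product set ∏_l U_{δ,(a_l,b_l)}. -/
theorem oneJp_tendstoUniformlyOn (p : ℕ) (hp : 0 < p) (a b : Fin p → ℝ) (δ : ℝ)
    (ha : ∀ l, a l ∈ Set.Ico (0 : ℝ) 1) (hb : ∀ l, b l ∈ Set.Ioc (0 : ℝ) 1)
    (hab : ∀ l, a l < b l) (hδ : 0 < δ) (hδ1 : δ < 1) :
    TendstoUniformlyOn (fun J x => oneJp J x a b) (fun x => indBox a b x)
      Filter.atTop {x : Fin p → ℝ | ∀ l, x l ∈ Uset δ (a l) (b l)} := by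
  have habs : ∀ (u v t : ℝ), |indIoo u v t| ≤ 1 := by
    intro u v t
    unfold indIoo
    split_ifs <;> norm_num
  have key := prodTU (ι := Fin p) (α := Fin p → ℝ) Finset.univ
    (fun l J x => oneJ J (x l) (a l) (b l))
    (fun l x => indIoo (a l) (b l) (x l))
    {x : Fin p → ℝ | ∀ l, x l ∈ Uset δ (a l) (b l)}
    (fun l _ => by
      have h1d := oneJ_unif (a l) (b l) δ (ha l) (hb l) (hab l) hδ hδ1
      have hcomp := h1d.comp (fun x : Fin p → ℝ => x l)
      exact hcomp.mono (fun x hx => hx l))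
    (fun l _ x _ => habs _ _ _)
  have hrw1 : (fun J (x : Fin p → ℝ) => oneJp J x a b)
      = fun J x => ∏ l, oneJ J (x l) (a l) (b l) := rfl
  have hrw2 : (fun x : Fin p → ℝ => indBox a b x)
      = fun x => ∏ l, indIoo (a l) (b l) (x l) := rfl
  rw [hrw1, hrw2]
  exact key
end

section
/- Let p ∈ ℕ⁺ and let P be a probability measure on the Borel σ-algebra of the open cube (0,1)^p that is absolutely continuous with respect to p-dimensional Lebesgue measure. Fix a ∈ [0,1)^p and b ∈ (0,1]^p with a_l < b_l for each l. Define the error e_J(x,a,b) = 𝟙(a < x < b) − 1_J(x,a,b) for x ∈ (0,1)^p. Then the expectation of the error under P tends to zero: lim_{J→∞} ∫ e_J(x,a,b) dP(x) = 0. -/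
open Real Filter Finset Topology

noncomputable def Tsum (J : ℕ) (t : ℝ) : ℝ :=
  ∑ j ∈ Finset.range J, Real.sin ((2*j+1 : ℝ)*t) / (2*j+1)

lemma Tsum_neg (J : ℕ) (t : ℝ) : Tsum J (-t) = - Tsum J t := by
  simp [Tsum, mul_neg, Real.sin_neg, neg_div, Finset.sum_neg_distrib]

lemma two_sin_mul_cos (u v : ℝ) : 2 * Real.sin u * Real.cos v = Real.sin (v + u) - Real.sin (v - u) := by
  rw [Real.sin_sub_sin]
  have e1 : (v + u - (v - u))/2 = u := by ring
  have e2 : (v + u + (v - u))/2 = v := by ring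
  rw [e1, e2]

lemma two_sin_mul_sin (u v : ℝ) : 2 * Real.sin u * Real.sin v = Real.cos (v - u) - Real.cos (v + u) := by
  rw [Real.cos_sub_cos]
  have e1 : (v - u + (v + u))/2 = v := by ring
  have e2 : (v - u - (v + u))/2 = -u := by ring
  rw [e1, e2, Real.sin_neg]; ring

lemma dirichlet_cos (J : ℕ) (s : ℝ) :
    2 * Real.sin s * (∑ j ∈ Finset.range J, Real.cos ((2*j+1:ℝ)*s)) = Real.sin (2*J*s) := by
  induction J with
  | zero => simp
  | succ n ih =>
    rw [Finset.sum_range_succ, mul_add, ih, two_sin_mul_cos]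
    have e1 : (2*(n:ℝ)+1)*s + s = 2*((n:ℕ):ℝ)*s + 2*s := by ring
    have e2 : (2*(n:ℝ)+1)*s - s = 2*((n:ℕ):ℝ)*s := by ring
    push_cast
    rw [e1, e2]
    ring_nf

lemma dirichlet_sin (N m : ℕ) (t : ℝ) :
    2 * Real.sin t * (∑ k ∈ Finset.range m, Real.sin ((2*((N:ℝ)+k)+1)*t)) =
      Real.cos (2*N*t) - Real.cos (2*((N:ℝ)+m)*t) := by
  induction m with
  | zero => simp
  | succ n ih =>
    rw [Finset.sum_range_succ, mul_add, ih, two_sin_mul_sin]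
    have e1 : (2*((N:ℝ)+(n:ℝ))+1)*t - t = 2*((N:ℝ)+(n:ℝ))*t := by ring
    have e2 : (2*((N:ℝ)+(n:ℝ))+1)*t + t = 2*((N:ℝ)+((n:ℝ)+1))*t := by ring
    push_cast
    rw [e1, e2]
    ring_nf

lemma abs_Tsum_le_of_pos {J : ℕ} {t : ℝ} (ht0 : 0 < t) (ht1 : t ≤ 1) : |Tsum J t| ≤ 3 := by
  have hpi := Real.pi_gt_three
  have hsin : 0 < Real.sin t :=
    Real.sin_pos_of_pos_of_lt_pi ht0 (by linarith)
  set N := min J ⌈1/t⌉₊ with hNdef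
  have hNJ : N ≤ J := min_le_left _ _
  have hsplit : (∑ j ∈ Finset.range N, Real.sin ((2*j+1:ℝ)*t)/(2*j+1))
      + (∑ j ∈ Finset.Ico N J, Real.sin ((2*j+1:ℝ)*t)/(2*j+1)) = Tsum J t :=
    Finset.sum_range_add_sum_Ico _ hNJ
  -- head bound
  have hterm : ∀ j : ℕ, |Real.sin ((2*j+1:ℝ)*t)/(2*j+1)| ≤ t := by
    intro j
    have h1 : (0:ℝ) < 2*j+1 := by positivity
    rw [abs_div, abs_of_pos h1, div_le_iff₀ h1]
    calc |Real.sin ((2*j+1:ℝ)*t)| ≤ |(2*j+1:ℝ)*t| := Real.abs_sin_le_abs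
      _ = (2*j+1)*t := by rw [abs_of_pos (by positivity)]
      _ = t*(2*j+1) := by ring
  have hhead : |∑ j ∈ Finset.range N, Real.sin ((2*j+1:ℝ)*t)/(2*j+1)| ≤ 2 := by
    calc |∑ j ∈ Finset.range N, Real.sin ((2*j+1:ℝ)*t)/(2*j+1)|
        ≤ ∑ j ∈ Finset.range N, |Real.sin ((2*j+1:ℝ)*t)/(2*j+1)| := Finset.abs_sum_le_sum_abs _ _
      _ ≤ ∑ _j ∈ Finset.range N, t := Finset.sum_le_sum (fun j _ => hterm j)
      _ = N * t := by rw [Finset.sum_const, Finset.card_range]; ring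
      _ ≤ (⌈1/t⌉₊ : ℝ) * t := by
          have : (N:ℝ) ≤ (⌈1/t⌉₊ : ℝ) := by exact_mod_cast min_le_right J ⌈1/t⌉₊
          nlinarith
      _ ≤ (1/t + 1) * t := by
          have := Nat.ceil_lt_add_one (R := ℝ) (a := 1/t) (by positivity)
          nlinarith
      _ = 1 + t := by field_simp
      _ ≤ 2 := by linarith
  -- tail bound
  have htail : |∑ j ∈ Finset.Ico N J, Real.sin ((2*j+1:ℝ)*t)/(2*j+1)| ≤ 1 := by
    rcases le_or_gt J ⌈1/t⌉₊ with hle | hlt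
    · have : N = J := min_eq_left hle
      simp [this]
    · have hNC : N = ⌈1/t⌉₊ := min_eq_right hlt.le
      have hNt : 1/t ≤ (N:ℝ) := hNC ▸ Nat.le_ceil _
      set n := J - N with hn
      have hnpos : 0 < n := by omega
      set f : ℕ → ℝ := fun k => (2*((N:ℝ)+k)+1)⁻¹ with hf
      set g : ℕ → ℝ := fun k => Real.sin ((2*((N:ℝ)+k)+1)*t) with hg
      have hfpos : ∀ k, 0 < f k := by
        intro k; simp only [hf]; positivity
      have hfmono : ∀ k, f (k+1) ≤ f k := by
        intro k
        simp only [hf]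
        apply inv_anti₀
        · positivity
        · push_cast; linarith
      have hGbound : ∀ m : ℕ, |∑ i ∈ Finset.range m, g i| ≤ 1 / Real.sin t := by
        intro m
        have h2 : |2 * Real.sin t * (∑ i ∈ Finset.range m, g i)| ≤ 2 := by
          rw [hg, dirichlet_sin N m t]
          calc |Real.cos (2*(N:ℝ)*t) - Real.cos (2*((N:ℝ)+m)*t)|
              ≤ |Real.cos (2*(N:ℝ)*t)| + |Real.cos (2*((N:ℝ)+m)*t)| := abs_sub _ _
            _ ≤ 1 + 1 := add_le_add (Real.abs_cos_le_one _) (Real.abs_cos_le_one _)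
            _ = 2 := by norm_num
        rw [abs_mul, abs_of_pos (by positivity : (0:ℝ) < 2 * Real.sin t)] at h2
        rw [le_div_iff₀ hsin]
        nlinarith [abs_nonneg (∑ i ∈ Finset.range m, g i)]
      have hterm' : ∀ k : ℕ, Real.sin ((2*((N+k:ℕ):ℝ)+1)*t)/(2*((N+k:ℕ):ℝ)+1) = f k • g k := by
        intro k
        simp only [hf, hg, smul_eq_mul]
        push_cast
        rw [div_eq_inv_mul]
      rw [Finset.sum_Ico_eq_sum_range]
      simp only [hterm']
      rw [Finset.sum_range_by_parts f g n]
      have hsum_tel : ∑ i ∈ Finset.range (n-1), (f i - f (i+1)) = f 0 - f (n-1) :=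
        Finset.sum_range_sub' f (n-1)
      have habs : |f (n - 1) • (∑ i ∈ Finset.range n, g i)
          - ∑ i ∈ Finset.range (n - 1), (f (i + 1) - f i) • (∑ j ∈ Finset.range (i+1), g j)|
          ≤ f (n-1) * (1/Real.sin t) + (f 0 - f (n-1)) * (1/Real.sin t) := by
        have h1 : |f (n - 1) • (∑ i ∈ Finset.range n, g i)| ≤ f (n-1) * (1/Real.sin t) := by
          rw [smul_eq_mul, abs_mul, abs_of_pos (hfpos _)]
          exact mul_le_mul_of_nonneg_left (hGbound n) (hfpos _).le
        have h2 : |∑ i ∈ Finset.range (n - 1), (f (i + 1) - f i) • (∑ j ∈ Finset.range (i+1), g j)|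
            ≤ (f 0 - f (n-1)) * (1/Real.sin t) := by
          calc |∑ i ∈ Finset.range (n - 1), (f (i + 1) - f i) • (∑ j ∈ Finset.range (i+1), g j)|
              ≤ ∑ i ∈ Finset.range (n - 1), |(f (i + 1) - f i) • (∑ j ∈ Finset.range (i+1), g j)| :=
                Finset.abs_sum_le_sum_abs _ _
            _ ≤ ∑ i ∈ Finset.range (n - 1), (f i - f (i+1)) * (1/Real.sin t) := by
                apply Finset.sum_le_sum
                intro i _
                rw [smul_eq_mul, abs_mul, abs_sub_comm, abs_of_nonneg (by linarith [hfmono i])]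
                exact mul_le_mul (le_refl _) (hGbound _) (abs_nonneg _) (by linarith [hfmono i])
            _ = (f 0 - f (n-1)) * (1/Real.sin t) := by
                rw [← Finset.sum_mul, hsum_tel]
          
        calc _ ≤ _ := abs_sub _ _
          _ ≤ _ := add_le_add h1 h2
      have hf0 : f 0 ≤ t / 2 := by
        simp only [hf]
        rw [inv_le_comm₀ (by positivity) (by positivity), inv_div]
        push_cast
        rw [div_le_iff₀ ht0]
        have h1 : 1 ≤ (N:ℝ) * t := by
          rw [div_le_iff₀ ht0] at hNt; linarith
        nlinarith
      have hle1 : f 0 ≤ Real.sin t := by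
        have h2 : 2/Real.pi * t ≤ Real.sin t := Real.mul_le_sin ht0.le (by linarith)
        have h4 := Real.pi_le_four
        have hps := Real.pi_pos
        have : t / 2 ≤ 2/Real.pi * t := by
          rw [div_le_iff₀ (by norm_num : (0:ℝ) < 2)]
          have e : 2 / π * t * 2 = 4*t/π := by ring
          rw [e, le_div_iff₀ hps]
          nlinarith
        linarith [hf0]
      calc |f (n - 1) • (∑ i ∈ Finset.range n, g i)
          - ∑ i ∈ Finset.range (n - 1), (f (i + 1) - f i) • (∑ j ∈ Finset.range (i+1), g j)|
          ≤ f (n-1) * (1/Real.sin t) + (f 0 - f (n-1)) * (1/Real.sin t) := habs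
        _ = f 0 / Real.sin t := by ring
        _ ≤ 1 := by rw [div_le_one hsin]; exact hle1
  calc |Tsum J t| = |_ + _| := by rw [hsplit]
    _ ≤ _ + _ := abs_add_le _ _
    _ ≤ 2 + 1 := add_le_add hhead htail
    _ = 3 := by norm_num

lemma Tsum_pi_div_two (J : ℕ) : Tsum J (π/2) = ∑ j ∈ Finset.range J, (-1:ℝ)^j / (2*j+1) := by
  unfold Tsum
  refine Finset.sum_congr rfl (fun j _ => ?_)
  congr 1
  have e : (2*(j:ℝ)+1)*(π/2) = j*π - (-(π/2)) := by ring
  have hc : Real.cos ((j:ℝ)*π) = (-1)^j := by simpa using Real.cos_nat_mul_pi_sub 0 j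
  rw [e, Real.sin_sub, Real.sin_nat_mul_pi, hc]
  simp

lemma hasDerivAt_Tsum (J : ℕ) (s : ℝ) :
    HasDerivAt (fun u => Tsum J u) (∑ j ∈ Finset.range J, Real.cos ((2*j+1:ℝ)*s)) s := by
  unfold Tsum
  apply HasDerivAt.fun_sum
  intro j _
  have h1 : HasDerivAt (fun u : ℝ => (2*(j:ℝ)+1)*u) (2*(j:ℝ)+1) s := by
    simpa using (hasDerivAt_id s).const_mul (2*(j:ℝ)+1)
  have h2 := (Real.hasDerivAt_sin ((2*(j:ℝ)+1)*s)).comp s h1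
  have h3 := h2.div_const (2*(j:ℝ)+1)
  have hne : (2*(j:ℝ)+1) ≠ 0 := by positivity
  refine h3.congr_deriv ?_
  field_simp

set_option maxHeartbeats 1000000 in
lemma tendsto_Tsum_pos {t : ℝ} (ht0 : 0 < t) (ht1 : t ≤ 1) :
    Tendsto (fun J => Tsum J t) atTop (𝓝 (π/4)) := by
  have hpi := Real.pi_gt_three
  have htpi2 : t < π/2 := by linarith
  have hsin : 0 < Real.sin t := Real.sin_pos_of_pos_of_lt_pi ht0 (by linarith)
  have hsub : Set.uIcc (π/2) t ⊆ Set.Icc t (π/2) := by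
    rw [Set.uIcc_of_ge (by linarith : t ≤ π/2)]
  have hsinIcc : ∀ s ∈ Set.Icc t (π/2), Real.sin t ≤ Real.sin s := by
    intro s hs
    exact Real.sin_le_sin_of_le_of_le_pi_div_two (by linarith) hs.2 hs.1
  have hsinpos : ∀ s ∈ Set.Icc t (π/2), 0 < Real.sin s :=
    fun s hs => lt_of_lt_of_le hsin (hsinIcc s hs)
  -- the integral representation
  have hrep : ∀ J : ℕ, Tsum J t = Tsum J (π/2)
      + ∫ s in (π/2)..t, (∑ j ∈ Finset.range J, Real.cos ((2*j+1:ℝ)*s)) := by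
    intro J
    have hcont : Continuous (fun s : ℝ => ∑ j ∈ Finset.range J, Real.cos ((2*j+1:ℝ)*s)) := by
      apply continuous_finset_sum
      intro j _
      exact (Real.continuous_cos.comp (continuous_const.mul continuous_id))
    rw [intervalIntegral.integral_eq_sub_of_hasDerivAt
      (fun s _ => hasDerivAt_Tsum J s) (hcont.intervalIntegrable _ _)]
    ring
  -- bound the integral
  set st := Real.sin t with hst
  set C := 1/st + π/st^2 with hC
  have hbound : ∀ J : ℕ, 1 ≤ J →
      |∫ s in (π/2)..t, (∑ j ∈ Finset.range J, Real.cos ((2*j+1:ℝ)*s))| ≤ C / J := by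
    intro J hJ
    have hJpos : (0:ℝ) < J := by exact_mod_cast hJ
    set u : ℝ → ℝ := fun s => (2 * Real.sin s)⁻¹ with hu
    set u' : ℝ → ℝ := fun s => -(2*Real.cos s) / (2*Real.sin s)^2 with hu'
    set v : ℝ → ℝ := fun s => -Real.cos (2*(J:ℝ)*s)/(2*J) with hv
    set v' : ℝ → ℝ := fun s => Real.sin (2*(J:ℝ)*s) with hv'
    have hcongr : ∫ s in (π/2)..t, (∑ j ∈ Finset.range J, Real.cos ((2*j+1:ℝ)*s))
        = ∫ s in (π/2)..t, u s * v' s := by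
      apply intervalIntegral.integral_congr
      intro s hs
      have hss := hsinpos s (hsub hs)
      have hd := dirichlet_cos J s
      simp only [hu, hv']
      field_simp
      have e : (2:ℝ)*s*J = 2*J*s := by ring
      rw [e]; linarith [hd]
    have hderivu : ∀ s ∈ Set.uIcc (π/2) t, HasDerivAt u (u' s) s := by
      intro s hs
      have hss := hsinpos s (hsub hs)
      have h1 : HasDerivAt (fun y : ℝ => 2 * Real.sin y) (2 * Real.cos s) s :=
        (Real.hasDerivAt_sin s).const_mul 2
      exact h1.inv (by positivity)
    have hderivv : ∀ s ∈ Set.uIcc (π/2) t, HasDerivAt v (v' s) s := by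
      intro s _
      have h1 : HasDerivAt (fun y : ℝ => 2*(J:ℝ)*y) (2*(J:ℝ)) s := by
        simpa using (hasDerivAt_id s).const_mul (2*(J:ℝ))
      have h2 := ((Real.hasDerivAt_cos ((2*(J:ℝ))*s)).comp s h1).neg.div_const (2*(J:ℝ))
      refine h2.congr_deriv ?_
      simp only [hv']
      field_simp
    have hcontu' : ContinuousOn u' (Set.uIcc (π/2) t) := by
      apply ContinuousOn.div
      · exact (continuous_const.mul Real.continuous_cos).neg.continuousOn
      · exact ((continuous_const.mul Real.continuous_sin).pow 2).continuousOn
      · intro s hs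
        have hss := hsinpos s (hsub hs)
        positivity
    have hcontv' : ContinuousOn v' (Set.uIcc (π/2) t) :=
      (Real.continuous_sin.comp (continuous_const.mul continuous_id)).continuousOn
    have hibp := intervalIntegral.integral_mul_deriv_eq_deriv_mul hderivu hderivv
      (hcontu'.intervalIntegrable) (hcontv'.intervalIntegrable)
    rw [hcongr, hibp]
    -- bounds
    have hvb : ∀ s : ℝ, |v s| ≤ 1/(2*J) := by
      intro s
      simp only [hv]
      rw [abs_div, abs_neg, abs_of_pos (by positivity : (0:ℝ) < 2*(J:ℝ))]
      gcongr
      exact Real.abs_cos_le_one _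
    have hub : ∀ s ∈ Set.Icc t (π/2), |u s| ≤ (2*st)⁻¹ := by
      intro s hs
      have hss := hsinpos s hs
      simp only [hu]
      rw [abs_of_pos (by positivity)]
      have h2s : 2*st ≤ 2 * Real.sin s := by nlinarith [hsinIcc s hs]
      exact inv_anti₀ (by positivity) h2s
    have hu'b : ∀ s ∈ Set.Icc t (π/2), |u' s| ≤ 2/(2*st)^2 := by
      intro s hs
      have hss := hsinpos s hs
      simp only [hu']
      rw [abs_div, abs_neg, abs_of_pos (by positivity : (0:ℝ) < (2*Real.sin s)^2)]
      apply div_le_div₀ (by positivity)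
      · rw [abs_mul, abs_of_pos (by norm_num : (0:ℝ) < 2)]
        nlinarith [Real.abs_cos_le_one s, abs_nonneg (Real.cos s)]
      · positivity
      · nlinarith [hsinIcc s hs, hsin]
    have h1 : |u t * v t| ≤ (2*st)⁻¹ * (1/(2*J)) := by
      rw [abs_mul]
      exact mul_le_mul (hub t ⟨le_refl t, htpi2.le⟩) (hvb t) (abs_nonneg _) (by positivity)
    have h2 : |u (π/2) * v (π/2)| ≤ (2*st)⁻¹ * (1/(2*J)) := by
      rw [abs_mul]
      exact mul_le_mul (hub (π/2) ⟨htpi2.le, le_refl _⟩) (hvb _) (abs_nonneg _) (by positivity)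
    have h3 : |∫ s in (π/2)..t, u' s * v s| ≤ (2/(2*st)^2 * (1/(2*J))) * |t - π/2| := by
      rw [← Real.norm_eq_abs]
      apply intervalIntegral.norm_integral_le_of_norm_le_const
      intro s hs
      have hs' : s ∈ Set.Icc t (π/2) := by
        rw [Set.uIoc_comm, Set.uIoc_of_le (by linarith : t ≤ π/2)] at hs
        exact ⟨hs.1.le, hs.2⟩
      rw [Real.norm_eq_abs, abs_mul]
      exact mul_le_mul (hu'b s hs') (hvb s) (abs_nonneg _) (by positivity)
    have habspi : |t - π/2| ≤ π/2 := by
      rw [abs_of_nonpos (by linarith)]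
      linarith
    have h3' : |∫ s in (π/2)..t, u' s * v s| ≤ 2/(2*st)^2 * (1/(2*J)) * (π/2) :=
      le_trans h3 (mul_le_mul_of_nonneg_left habspi (by positivity))
    have htri : |u t * v t - u (π/2) * v (π/2) - ∫ s in (π/2)..t, u' s * v s|
        ≤ |u t * v t| + |u (π/2) * v (π/2)| + |∫ s in (π/2)..t, u' s * v s| := by
      calc |u t * v t - u (π/2) * v (π/2) - ∫ s in (π/2)..t, u' s * v s|
          ≤ |u t * v t - u (π/2) * v (π/2)| + |∫ s in (π/2)..t, u' s * v s| := abs_sub _ _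
        _ ≤ |u t * v t| + |u (π/2) * v (π/2)| + |∫ s in (π/2)..t, u' s * v s| := by
            have := abs_sub (u t * v t) (u (π/2) * v (π/2))
            linarith
    have hnum : 1/(2*st) + π/(8*st^2) ≤ C := by
      rw [hC]
      have h1' : 1/(2*st) ≤ 1/st := by
        rw [div_le_div_iff₀ (by positivity) (by positivity)]
        nlinarith
      have h2' : π/(8*st^2) ≤ π/st^2 := by
        rw [div_le_div_iff₀ (by positivity) (by positivity)]
        nlinarith [Real.pi_pos]
      linarith
    have heq : (2*st)⁻¹ * (1/(2*(J:ℝ))) + (2*st)⁻¹ * (1/(2*J)) + 2/(2*st)^2 * (1/(2*J)) * (π/2)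
        = (1/(2*st) + π/(8*st^2))/J := by
      have hstne : st ≠ 0 := ne_of_gt hsin
      have hJne : (J:ℝ) ≠ 0 := ne_of_gt hJpos
      field_simp
      ring
    calc |u t * v t - u (π/2) * v (π/2) - ∫ s in (π/2)..t, u' s * v s|
        ≤ (2*st)⁻¹ * (1/(2*(J:ℝ))) + (2*st)⁻¹ * (1/(2*J)) + 2/(2*st)^2 * (1/(2*J)) * (π/2) := by
          linarith [htri, h1, h2, h3']
      _ = (1/(2*st) + π/(8*st^2))/J := heq
      _ ≤ C/J := (div_le_div_iff_of_pos_right hJpos).mpr hnum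
  have hint0 : Tendsto (fun J : ℕ => ∫ s in (π/2)..t,
      (∑ j ∈ Finset.range J, Real.cos ((2*j+1:ℝ)*s))) atTop (𝓝 0) := by
    apply squeeze_zero_norm'
    · filter_upwards [eventually_ge_atTop 1] with J hJ using hbound J hJ
    · exact tendsto_const_div_atTop_nhds_zero_nat C
  have hleib : Tendsto (fun J : ℕ => Tsum J (π/2)) atTop (𝓝 (π/4)) := by
    simp only [Tsum_pi_div_two]
    exact Real.tendsto_sum_pi_div_four
  have := hleib.add hint0
  rw [add_zero] at this
  exact this.congr (fun J => (hrep J).symm)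

lemma abs_Tsum_le (J : ℕ) {t : ℝ} (ht : |t| ≤ 1) : |Tsum J t| ≤ 3 := by
  rcases lt_trichotomy t 0 with h | h | h
  · have : |Tsum J (-(-t))| ≤ 3 := by
      rw [Tsum_neg, abs_neg]
      exact abs_Tsum_le_of_pos (by linarith) (by rw [abs_of_neg h] at ht; linarith)
    simpa using this
  · simp [h, Tsum]
  · exact abs_Tsum_le_of_pos h (by rwa [abs_of_pos h] at ht)

lemma tendsto_Tsum {t : ℝ} (h0 : t ≠ 0) (h1 : |t| ≤ 1) :
    Tendsto (fun J => Tsum J t) atTop (𝓝 ((π/4) * (if 0 < t then 1 else -1))) := by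
  rcases lt_or_gt_of_ne h0 with h | h
  · have hpos : Tendsto (fun J => Tsum J (-t)) atTop (𝓝 (π/4)) :=
      tendsto_Tsum_pos (by linarith) (by rw [abs_of_neg h] at h1; linarith)
    have := hpos.neg
    simp only [Tsum_neg, neg_neg] at this
    simpa [if_neg (not_lt.mpr h.le), h.not_gt] using this
  · simpa [if_pos h] using tendsto_Tsum_pos h (by rwa [abs_of_pos h] at h1)

lemma oneJ_eq (J : ℕ) (x a b : ℝ) :
    oneJ J x a b = gfun 0 a b
      + (2/Real.pi) * ((if b < 1 then (1:ℝ) else 0) * Tsum J (b - x)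
        + (if 0 < a then (1:ℝ) else 0) * Tsum J (x - a)) := by
  induction J with
  | zero => simp [oneJ, Tsum, cfun]
  | succ n ih =>
    have hrange : 2 * (n+1) + 1 = (2*n+1) + 1 + 1 := by ring
    rw [oneJ, hrange, Finset.sum_range_succ, Finset.sum_range_succ, ← oneJ, ih]
    have hc1 : cfun (2*n+1) x = Real.cos (((2*n+1:ℕ):ℝ)*x) := by
      rw [cfun, if_neg (by omega), if_pos (by omega)]
    have hc2 : cfun (2*n+1+1) x = Real.sin ((((2*n+1+1:ℕ):ℝ)-1)*x) := by
      rw [cfun, if_neg (by omega), if_neg (by omega)]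
    have hg1 : gfun (2*n+1) a b = (2 / (Real.pi * ((2*n+1:ℕ):ℝ))) *
        ((if b < 1 then (1:ℝ) else 0) * Real.sin (((2*n+1:ℕ):ℝ) * b) -
          (if 0 < a then (1:ℝ) else 0) * Real.sin (((2*n+1:ℕ):ℝ) * a)) := by
      rw [gfun, if_neg (by omega), if_pos (by omega)]
    have hg2 : gfun (2*n+1+1) a b = (2 / (Real.pi * (((2*n+1+1:ℕ):ℝ) - 1))) *
        ((if 0 < a then (1:ℝ) else 0) * Real.cos ((((2*n+1+1:ℕ):ℝ) - 1) * a) -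
          (if b < 1 then (1:ℝ) else 0) * Real.cos ((((2*n+1+1:ℕ):ℝ) - 1) * b)) := by
      rw [gfun, if_neg (by omega), if_neg (by omega)]
    rw [hc1, hc2, hg1, hg2]
    have hc : ((2*n+1+1 : ℕ) : ℝ) - 1 = ((2*n+1 : ℕ) : ℝ) := by push_cast; ring
    rw [hc]
    have hcast : ((2*n+1 : ℕ) : ℝ) = 2*(n:ℝ)+1 := by push_cast; ring
    rw [hcast]
    have hT1 : Tsum (n+1) (b-x) = Tsum n (b-x) + Real.sin ((2*(n:ℝ)+1)*(b-x))/(2*(n:ℝ)+1) := by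
      rw [Tsum, Finset.sum_range_succ, ← Tsum]
    have hT2 : Tsum (n+1) (x-a) = Tsum n (x-a) + Real.sin ((2*(n:ℝ)+1)*(x-a))/(2*(n:ℝ)+1) := by
      rw [Tsum, Finset.sum_range_succ, ← Tsum]
    rw [hT1, hT2]
    have hsb : Real.sin ((2*(n:ℝ)+1)*(b-x))
        = Real.sin ((2*(n:ℝ)+1)*b) * Real.cos ((2*(n:ℝ)+1)*x)
          - Real.cos ((2*(n:ℝ)+1)*b) * Real.sin ((2*(n:ℝ)+1)*x) := by
      rw [mul_sub, Real.sin_sub]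
    have hsa : Real.sin ((2*(n:ℝ)+1)*(x-a))
        = Real.sin ((2*(n:ℝ)+1)*x) * Real.cos ((2*(n:ℝ)+1)*a)
          - Real.cos ((2*(n:ℝ)+1)*x) * Real.sin ((2*(n:ℝ)+1)*a) := by
      rw [mul_sub, Real.sin_sub]
    rw [hsb, hsa]
    have hpi : Real.pi ≠ 0 := ne_of_gt Real.pi_pos
    have hn : (2*(n:ℝ)+1) ≠ 0 := by positivity
    generalize (if b < 1 then (1:ℝ) else 0) = ib
    generalize (if 0 < a then (1:ℝ) else 0) = ia
    field_simp
    ring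

lemma gfun0_bounds (a b : ℝ) : 0 ≤ gfun 0 a b ∧ gfun 0 a b ≤ 1 := by
  rw [gfun, if_pos rfl]
  split_ifs <;> norm_num

lemma abs_oneJ_le (J : ℕ) {x a b : ℝ} (hx0 : 0 ≤ x) (hx1 : x ≤ 1)
    (ha0 : 0 ≤ a) (ha1 : a ≤ 1) (hb0 : 0 ≤ b) (hb1 : b ≤ 1) :
    |oneJ J x a b| ≤ 5 := by
  have hpi := Real.pi_gt_three
  rw [oneJ_eq]
  have h0 := gfun0_bounds a b
  have hb : |Tsum J (b - x)| ≤ 3 := abs_Tsum_le J (abs_le.mpr ⟨by linarith, by linarith⟩)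
  have ha : |Tsum J (x - a)| ≤ 3 := abs_Tsum_le J (abs_le.mpr ⟨by linarith, by linarith⟩)
  have hib : |(if b < 1 then (1:ℝ) else 0)| ≤ 1 := by split_ifs <;> norm_num
  have hia : |(if 0 < a then (1:ℝ) else 0)| ≤ 1 := by split_ifs <;> norm_num
  have h2pi : |2/Real.pi| ≤ 2/3 := by
    rw [abs_div]
    rw [abs_of_pos (by linarith : (0:ℝ) < Real.pi), abs_of_pos (by norm_num : (0:ℝ) < 2)]
    rw [div_le_div_iff₀ (by linarith) (by norm_num)]
    linarith
  calc |gfun 0 a b + (2/Real.pi) * ((if b < 1 then (1:ℝ) else 0) * Tsum J (b - x)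
        + (if 0 < a then (1:ℝ) else 0) * Tsum J (x - a))|
      ≤ |gfun 0 a b| + |(2/Real.pi) * ((if b < 1 then (1:ℝ) else 0) * Tsum J (b - x)
        + (if 0 < a then (1:ℝ) else 0) * Tsum J (x - a))| := abs_add_le _ _
    _ ≤ 1 + (2/3) * (1*3 + 1*3) := by
        apply add_le_add
        · rw [abs_of_nonneg h0.1]; exact h0.2
        · rw [abs_mul]
          apply mul_le_mul h2pi ?_ (abs_nonneg _) (by norm_num)
          calc |(if b < 1 then (1:ℝ) else 0) * Tsum J (b - x)
              + (if 0 < a then (1:ℝ) else 0) * Tsum J (x - a)|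
              ≤ |(if b < 1 then (1:ℝ) else 0) * Tsum J (b - x)|
                + |(if 0 < a then (1:ℝ) else 0) * Tsum J (x - a)| := abs_add_le _ _
            _ ≤ 1*3 + 1*3 := by
                apply add_le_add
                · rw [abs_mul]
                  exact mul_le_mul hib hb (abs_nonneg _) (by norm_num)
                · rw [abs_mul]
                  exact mul_le_mul hia ha (abs_nonneg _) (by norm_num)
    _ ≤ 5 := by norm_num

lemma tendsto_oneJ {x a b : ℝ} (hx : x ∈ Set.Ioo (0:ℝ) 1)
    (ha : a ∈ Set.Ico (0:ℝ) 1) (hb : b ∈ Set.Ioc (0:ℝ) 1) (hab : a < b)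
    (hxa : x ≠ a) (hxb : x ≠ b) :
    Tendsto (fun J => oneJ J x a b) atTop (𝓝 (indIoo a b x)) := by
  obtain ⟨hx0, hx1⟩ := hx
  obtain ⟨ha0, ha1⟩ := ha
  obtain ⟨hb0, hb1⟩ := hb
  have htb : Tendsto (fun J => Tsum J (b - x)) atTop
      (𝓝 ((π/4) * (if 0 < b - x then 1 else -1))) :=
    tendsto_Tsum (sub_ne_zero.mpr (Ne.symm hxb)) (abs_le.mpr ⟨by linarith, by linarith⟩)
  have hta : Tendsto (fun J => Tsum J (x - a)) atTop
      (𝓝 ((π/4) * (if 0 < x - a then 1 else -1))) :=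
    tendsto_Tsum (sub_ne_zero.mpr hxa) (abs_le.mpr ⟨by linarith, by linarith⟩)
  have hlim : Tendsto (fun J => oneJ J x a b) atTop
      (𝓝 (gfun 0 a b + (2/Real.pi) * ((if b < 1 then (1:ℝ) else 0) * ((π/4) * (if 0 < b - x then 1 else -1))
        + (if 0 < a then (1:ℝ) else 0) * ((π/4) * (if 0 < x - a then 1 else -1))))) := by
    simp only [oneJ_eq]
    exact tendsto_const_nhds.add ((((tendsto_const_nhds.mul htb)).add
      ((tendsto_const_nhds.mul hta))).const_mul _)
  convert hlim using 2
  have hpi : Real.pi ≠ 0 := ne_of_gt Real.pi_pos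
  rw [gfun, if_pos rfl, indIoo]
  rcases lt_trichotomy x a with h | h | h
  · -- x < a, so 0 < a, x - a < 0, b - x > 0
    rw [if_neg (by intro hc; linarith [hc.1]), if_pos (by linarith : (0:ℝ) < a),
      if_pos (by linarith : (0:ℝ) < b - x), if_neg (by linarith : ¬ (0:ℝ) < x - a)]
    split_ifs with hb1'
    · field_simp; norm_num
    · field_simp
      ring
  · exact absurd h hxa
  · rcases lt_trichotomy x b with h' | h' | h'
    · -- a < x < b
      rw [if_pos ⟨h, h'⟩, if_pos (by linarith : (0:ℝ) < b - x), if_pos (by linarith : (0:ℝ) < x - a)]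
      split_ifs with ha' hb1' hb1'' <;> field_simp <;> ring
    · exact absurd h' hxb
    · -- x > b, so b < 1
      rw [if_neg (by intro hc; linarith [hc.2]), if_pos (by linarith : b < 1),
        if_neg (by linarith : ¬ (0:ℝ) < b - x), if_pos (by linarith : (0:ℝ) < x - a)]
      split_ifs with ha'
      · field_simp; norm_num
      · field_simp
        ring


lemma continuous_Tsum (J : ℕ) : Continuous (fun t => Tsum J t) := by
  apply continuous_finset_sum
  intro j _
  exact (Real.continuous_sin.comp (continuous_const.mul continuous_id)).div_const _

lemma continuous_oneJ (J : ℕ) (a b : ℝ) : Continuous (fun x => oneJ J x a b) := by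
  have hT := continuous_Tsum J
  have : (fun x => oneJ J x a b) = fun x => gfun 0 a b
      + (2/Real.pi) * ((if b < 1 then (1:ℝ) else 0) * Tsum J (b - x)
        + (if 0 < a then (1:ℝ) else 0) * Tsum J (x - a)) := by
    funext x; exact oneJ_eq J x a b
  rw [this]
  exact continuous_const.add (continuous_const.mul
    ((continuous_const.mul (hT.comp (continuous_const.sub continuous_id))).add
      (continuous_const.mul (hT.comp (continuous_id.sub continuous_const)))))


open MeasureTheory

/-- if P is a probability measure on (0,1)^p absolutely continuous w.r.t.
Lebesgue measure, then the expected approximation error e_J = 𝟙(a<·<b) − 1_J(·,a,b)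
tends to 0 as J → ∞. -/
theorem expected_error_tendsto_zero (p : ℕ) (hp : 0 < p)
    (P : Measure (Fin p → ℝ)) [IsProbabilityMeasure P]
    (hac : P ≪ volume)
    (hsupp : P {x : Fin p → ℝ | ∀ l, x l ∈ Set.Ioo (0 : ℝ) 1} = 1)
    (a b : Fin p → ℝ)
    (ha : ∀ l, a l ∈ Set.Ico (0 : ℝ) 1) (hb : ∀ l, b l ∈ Set.Ioc (0 : ℝ) 1)
    (hab : ∀ l, a l < b l) :
    Filter.Tendsto (fun J : ℕ => ∫ x, (indBox a b x - oneJp J x a b) ∂P)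
      Filter.atTop (nhds 0) := by

  classical
  have hpow : (0:ℝ) < 1 + 5^p := by positivity
  -- the cube has full measure
  have hCubeSet : {x : Fin p → ℝ | ∀ l, x l ∈ Set.Ioo (0:ℝ) 1}
      = Set.pi Set.univ (fun _ => Set.Ioo (0:ℝ) 1) := by
    ext x; simp [Set.mem_pi]
  have hCube : MeasurableSet {x : Fin p → ℝ | ∀ l, x l ∈ Set.Ioo (0:ℝ) 1} := by
    rw [hCubeSet]
    exact MeasurableSet.univ_pi (fun _ => measurableSet_Ioo)
  have hae_cube : ∀ᵐ x ∂P, ∀ l, x l ∈ Set.Ioo (0:ℝ) 1 := by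
    rw [ae_iff]
    have he : {x | ¬ ∀ l, x l ∈ Set.Ioo (0:ℝ) 1}
        = {x : Fin p → ℝ | ∀ l, x l ∈ Set.Ioo (0:ℝ) 1}ᶜ := rfl
    rw [he, measure_compl hCube (measure_ne_top P _), hsupp, measure_univ]
    simp
  have hae_ne : ∀ᵐ x ∂P, ∀ l, x l ≠ a l ∧ x l ≠ b l := by
    rw [MeasureTheory.ae_all_iff]
    intro l
    have hplane : ∀ c : ℝ, P {x : Fin p → ℝ | x l = c} = 0 := by
      intro c
      apply hac
      rw [MeasureTheory.volume_pi]
      exact MeasureTheory.Measure.pi_hyperplane (fun _ : Fin p => (volume : Measure ℝ)) l c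
    rw [ae_iff]
    refine measure_mono_null ?_ (measure_union_null (hplane (a l)) (hplane (b l)))
    intro x hx
    simp only [Set.mem_setOf_eq, not_and_or, not_not] at hx
    rcases hx with h | h
    · exact Or.inl h
    · exact Or.inr h
  -- measurability
  have hmeasInd : Measurable (fun x : Fin p → ℝ => indBox a b x) := by
    apply Finset.measurable_prod
    intro l _
    have hset : MeasurableSet {x : Fin p → ℝ | a l < x l ∧ x l < b l} :=
      (measurable_pi_apply l) measurableSet_Ioo
    exact Measurable.ite hset measurable_const measurable_const
  have hcontOne : ∀ J : ℕ, Continuous (fun x : Fin p → ℝ => oneJp J x a b) := by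
    intro J
    apply continuous_finset_prod
    intro l _
    exact (continuous_oneJ J (a l) (b l)).comp (continuous_apply l)
  -- bounds
  have hIndB : ∀ x : Fin p → ℝ, |indBox a b x| ≤ 1 := by
    intro x
    rw [indBox, Finset.abs_prod]
    apply Finset.prod_le_one
    · intro l _; exact abs_nonneg _
    · intro l _
      rw [indIoo]
      split_ifs <;> norm_num
  have hlim0 : ∀ᵐ x ∂P, Filter.Tendsto (fun J : ℕ => indBox a b x - oneJp J x a b)
      Filter.atTop (nhds ((fun _ => (0:ℝ)) x)) := by
    filter_upwards [hae_cube, hae_ne] with x hx hne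
    have hprod : Filter.Tendsto (fun J => oneJp J x a b) Filter.atTop (nhds (indBox a b x)) := by
      rw [indBox]
      apply tendsto_finset_prod
      intro l _
      exact tendsto_oneJ (hx l) (ha l) (hb l) (hab l) (hne l).1 (hne l).2
    have := (tendsto_const_nhds (x := indBox a b x) (f := Filter.atTop (α := ℕ))).sub hprod
    simpa using this
  have hbound : ∀ J : ℕ, ∀ᵐ x ∂P, ‖indBox a b x - oneJp J x a b‖ ≤ 1 + 5^p := by
    intro J
    filter_upwards [hae_cube] with x hx
    have h2 : |oneJp J x a b| ≤ 5^p := by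
      rw [oneJp, Finset.abs_prod]
      calc ∏ l, |oneJ J (x l) (a l) (b l)| ≤ ∏ _l : Fin p, (5:ℝ) := by
            apply Finset.prod_le_prod
            · intro l _; exact abs_nonneg _
            · intro l _
              exact abs_oneJ_le J (hx l).1.le (hx l).2.le (ha l).1 (ha l).2.le
                (hb l).1.le (hb l).2
        _ = 5^p := by rw [Finset.prod_const, Finset.card_univ, Fintype.card_fin]
    calc ‖indBox a b x - oneJp J x a b‖ ≤ |indBox a b x| + |oneJp J x a b| := abs_sub _ _
      _ ≤ 1 + 5^p := add_le_add (hIndB x) h2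
  have hconv := MeasureTheory.tendsto_integral_of_dominated_convergence
    (F := fun (J : ℕ) (x : Fin p → ℝ) => indBox a b x - oneJp J x a b)
    (f := fun _ => (0:ℝ)) (bound := fun _ => 1 + 5^p)
    (fun J => ((hmeasInd.sub (hcontOne J).measurable).aestronglyMeasurable))
    (MeasureTheory.integrable_const _)
    hbound
    hlim0
  simpa using hconv
end
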